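/- Let U be a nonempty finite set with n := |U|, let W : U → ℝ satisfy W_i > 0 for all i ∈ U and Σ_{i∈U} W_i = n, let H : U → ℝ, and let κ ∈ ℝ satisfy n + κ·H_i > 0 for all i ∈ U, Σ_{i∈U} W_i/(n + κ·H_i) = 1 and Σ_{i∈U} W_i·H_i/(n + κ·H_i) = 0. Define L_UR := Σ_{i∈U} W_i·log(1/n) and L_R := sup { Σ_{i∈U} W_i·log p_i : p : U → ℝ, p_i > 0 for all i, Σ_{i∈U} W_i·p_i = 1, Σ_{i∈U} W_i·p_i·H_i = 0 }. Then L_R = Σ_{i∈U} W_i·log( 1/(n + κ·H_i) ), the supremum is attained at p_i = 1/(n + κ·H_i), and 2·(L_UR − L_R) = 2·Σ_{i∈U} W_i·log( 1 + κ·H_i/n ). (Exact expression of the pseudo-empirical likelihood-ratio in terms of the Lagrange multiplier κ.) -/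

import Mathlib

open Finset

/-- Exact expression of the pseudo-empirical likelihood-ratio in terms of the Lagrange
multiplier `κ`: the constrained maximum `L_R` equals `Σ W_i log (1/(n + κ·H_i))`, it is
attained at `p_i = 1/(n + κ·H_i)`, and `2(L_UR − L_R) = 2 Σ W_i log(1 + κ·H_i/n)`. -/
theorem pel_ratio_expression
    (U : Type*) [Fintype U] [Nonempty U]
    (W : U → ℝ) (hW : ∀ i, 0 < W i)
    (hsum : ∑ i, W i = (Fintype.card U : ℝ))
    (H : U → ℝ) (κ : ℝ)
    (hpos : ∀ i, 0 < (Fintype.card U : ℝ) + κ * H i)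
    (hc1 : ∑ i, W i / ((Fintype.card U : ℝ) + κ * H i) = 1)
    (hc2 : ∑ i, W i * H i / ((Fintype.card U : ℝ) + κ * H i) = 0)
    (LUR LR : ℝ)
    (hLUR : LUR = ∑ i, W i * Real.log (1 / (Fintype.card U : ℝ)))
    (hLR : LR = sSup {L : ℝ | ∃ p : U → ℝ, (∀ i, 0 < p i) ∧
        (∑ i, W i * p i = 1) ∧ (∑ i, W i * p i * H i = 0) ∧
        L = ∑ i, W i * Real.log (p i)}) :
    LR = ∑ i, W i * Real.log (1 / ((Fintype.card U : ℝ) + κ * H i)) ∧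
    (∑ i, W i * Real.log (1 / ((Fintype.card U : ℝ) + κ * H i))) ∈
      {L : ℝ | ∃ p : U → ℝ, (∀ i, 0 < p i) ∧
        (∑ i, W i * p i = 1) ∧ (∑ i, W i * p i * H i = 0) ∧
        L = ∑ i, W i * Real.log (p i)} ∧
    2 * (LUR - LR) = 2 * ∑ i, W i * Real.log (1 + κ * H i / (Fintype.card U : ℝ)) := by
  set n : ℝ := (Fintype.card U : ℝ) with hn
  have hn0 : 0 < n := by
    rw [hn]; exact_mod_cast Fintype.card_pos
  set S : Set ℝ := {L : ℝ | ∃ p : U → ℝ, (∀ i, 0 < p i) ∧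
      (∑ i, W i * p i = 1) ∧ (∑ i, W i * p i * H i = 0) ∧
      L = ∑ i, W i * Real.log (p i)} with hS
  set v : ℝ := ∑ i, W i * Real.log (1 / (n + κ * H i)) with hv
  have hp₀pos : ∀ i, 0 < 1 / (n + κ * H i) := fun i => by have := hpos i; positivity
  have hmem : v ∈ S := by
    refine ⟨fun i => 1 / (n + κ * H i), hp₀pos, ?_, ?_, rfl⟩
    · simpa only [mul_one_div] using hc1
    · calc ∑ i, W i * (1 / (n + κ * H i)) * H i
          = ∑ i, W i * H i / (n + κ * H i) := by
            apply Finset.sum_congr rfl; intro i _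
            rw [mul_one_div, div_mul_eq_mul_div]
        _ = 0 := hc2
  have hub : ∀ L ∈ S, L ≤ v := by
    rintro L ⟨p, hp, h1, h2, rfl⟩
    have key : ∀ i, W i * Real.log (p i) ≤
        W i * Real.log (1 / (n + κ * H i)) + (n * (W i * p i) + κ * (W i * p i * H i) - W i) := by
      intro i
      have ht := hpos i
      have hlog : Real.log (p i * (n + κ * H i)) ≤ p i * (n + κ * H i) - 1 :=
        Real.log_le_sub_one_of_pos (by have := hp i; positivity)
      rw [Real.log_mul (ne_of_gt (hp i)) (ne_of_gt ht)] at hlog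
      have hlog' : Real.log (p i) ≤ Real.log (1 / (n + κ * H i)) + (p i * (n + κ * H i) - 1) := by
        rw [one_div, Real.log_inv]; linarith
      have := mul_le_mul_of_nonneg_left hlog' (le_of_lt (hW i))
      calc W i * Real.log (p i)
          ≤ W i * (Real.log (1 / (n + κ * H i)) + (p i * (n + κ * H i) - 1)) := this
        _ = W i * Real.log (1 / (n + κ * H i)) +
            (n * (W i * p i) + κ * (W i * p i * H i) - W i) := by ring
    calc ∑ i, W i * Real.log (p i)
        ≤ ∑ i, (W i * Real.log (1 / (n + κ * H i)) +
            (n * (W i * p i) + κ * (W i * p i * H i) - W i)) :=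
          Finset.sum_le_sum fun i _ => key i
      _ = v + (n * (∑ i, W i * p i) + κ * (∑ i, W i * p i * H i) - ∑ i, W i) := by
          rw [Finset.sum_add_distrib, Finset.sum_sub_distrib, Finset.sum_add_distrib,
            ← Finset.mul_sum, ← Finset.mul_sum]
      _ = v := by rw [h1, h2, hsum]; ring
  have hLRv : LR = v := by
    rw [hLR]
    exact le_antisymm (csSup_le ⟨v, hmem⟩ hub) (le_csSup ⟨v, hub⟩ hmem)
  refine ⟨hLRv, hmem, ?_⟩
  rw [hLRv, hLUR]
  have : ∑ i, W i * Real.log (1 / n) - v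
      = ∑ i, W i * Real.log (1 + κ * H i / n) := by
    rw [hv, ← Finset.sum_sub_distrib]
    apply Finset.sum_congr rfl
    intro i _
    have ht := hpos i
    have h1 : (1 : ℝ) + κ * H i / n = (n + κ * H i) / n := by field_simp
    rw [h1, Real.log_div (ne_of_gt ht) (ne_of_gt hn0), one_div, one_div,
      Real.log_inv, Real.log_inv]
    ring
  linarith [this]
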